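/- arXiv:2006.08474 — 3 statements merged into one kernel-verified Lean document; each statement's English description precedes it below -/
import Mathlib

section
/- For every μ_P-integrable function φ : P → ℂ, every bounded Borel-measurable function f : M → ℂ, and every g ∈ P, one has ∫_P f(pr(g·g′))·φ(g′) dμ_P(g′) = ∫_M f(pr(g)·m′)·(λφ)(m′) dμ_M(m′). (This is the unfolding identity of Lemma 3.3: the natural injection I(f) = f ∘ pr intertwines the constant-term map λ with the action by integration, I(λ(φ)f) = φ·I(f).) -/
/-!
Statement 6: the unfolding identity. For `φ` integrable on `P`, `f` bounded Borel on
`M`, and `g ∈ P`: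
`∫_P f(pr(g·g′))·φ(g′) dμ_P(g′) = ∫_M f(pr(g)·m′)·(λφ)(m′) dμ_M(m′)`,
where `(λφ)(m) = ∫_N φ(σ(m)·n) dμ_N(n)` is the constant term.
-/

open MeasureTheory

theorem constant_term_unfolding
    {P M N : Type*}
    [Group P] [TopologicalSpace P] [IsTopologicalGroup P] [LocallyCompactSpace P]
    [SecondCountableTopology P] [T2Space P] [MeasurableSpace P] [BorelSpace P]
    [Group M] [TopologicalSpace M] [IsTopologicalGroup M] [LocallyCompactSpace M]
    [SecondCountableTopology M] [T2Space M] [MeasurableSpace M] [BorelSpace M]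
    [Group N] [TopologicalSpace N] [IsTopologicalGroup N] [LocallyCompactSpace N]
    [SecondCountableTopology N] [T2Space N] [MeasurableSpace N] [BorelSpace N]
    (μM : Measure M) (μN : Measure N) (μP : Measure P)
    [μM.IsHaarMeasure] [μN.IsHaarMeasure] [SigmaFinite μM] [SigmaFinite μN]
    -- `pr : P → M` is a continuous surjective homomorphism:
    (pr : P →* M) (hprc : Continuous pr) (hprs : Function.Surjective pr)
    -- `N` is identified with the kernel of `pr`, a closed subgroup of `P`:
    (ι : N →* P) (hιc : Continuous ι) (hιinj : Function.Injective ι)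
    (hιcl : IsClosed (Set.range ι))
    (hker : ∀ p : P, pr p = 1 ↔ ∃ n : N, ι n = p)
    -- `σ : M → P` is a continuous section of `pr`:
    (σ : M → P) (hσc : Continuous σ) (hσsec : ∀ m, pr (σ m) = m)
    -- `e(m,n) = σ(m)·n` is a bijection and `μ_P = e_*(μ_M ⊗ μ_N)`:
    (e : M × N → P) (he : ∀ m n, e (m, n) = σ m * ι n)
    (hbij : Function.Bijective e)
    (hμP : μP = Measure.map e (μM.prod μN))
    -- data of the identity:
    (φ : P → ℂ) (hφ : Integrable φ μP)
    (f : M → ℂ) (hf : Measurable f) (hfbd : ∃ C : ℝ, ∀ m, ‖f m‖ ≤ C)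
    (g : P) :
    ∫ g' : P, f (pr (g * g')) * φ g' ∂μP
      = ∫ m' : M, f (pr g * m') * (∫ n : N, φ (σ m' * ι n) ∂μN) ∂μM := by
  have he' : e = fun p : M × N => σ p.1 * ι p.2 := funext fun p => he p.1 p.2
  have hec : Continuous e := by
    rw [he']; exact (hσc.comp continuous_fst).mul (hιc.comp continuous_snd)
  have hem : Measurable e := hec.measurable
  have hprι : ∀ n : N, pr (ι n) = 1 := fun n => (hker (ι n)).mpr ⟨n, rfl⟩
  have hpre : ∀ p : M × N, pr (g * e p) = pr g * p.1 := by
    intro p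
    rw [he p.1 p.2, map_mul, map_mul, hσsec, hprι, mul_one]
  have hmeas : AEStronglyMeasurable (fun g' : P => f (pr (g * g')) * φ g') μP :=
    ((hf.comp (hprc.measurable.comp (measurable_const_mul g))).aestronglyMeasurable).mul
      hφ.aestronglyMeasurable
  subst hμP
  rw [integral_map hem.aemeasurable hmeas]
  have hφe : Integrable (fun p : M × N => φ (e p)) (μM.prod μN) :=
    (integrable_map_measure hφ.aestronglyMeasurable hem.aemeasurable).mp hφ
  have hint : Integrable (fun p : M × N => f (pr g * p.1) * φ (e p)) (μM.prod μN) := by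
    refine hφe.bdd_mul (c := hfbd.choose) ?_ ?_
    · exact (hf.comp ((measurable_const_mul (pr g)).comp measurable_fst)).aestronglyMeasurable
    · exact Filter.Eventually.of_forall fun p => hfbd.choose_spec _
  have hre : (fun p : M × N => f (pr (g * e p)) * φ (e p))
      = fun p : M × N => f (pr g * p.1) * φ (e p) := by
    funext p; rw [hpre p]
  rw [hre, integral_prod _ hint]
  refine integral_congr_ae (Filter.Eventually.of_forall fun m => ?_)
  simp only []
  rw [MeasureTheory.integral_const_mul]
  congr 1
  exact integral_congr_ae (Filter.Eventually.of_forall fun n => show φ (e (m, n)) = _ by rw [he])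
end

section
/- For all compactly supported continuous functions φ, ψ : P → ℂ, the constant-term map is multiplicative for convolution: λ(φ ∗_P ψ) = (λφ) ∗_M (λψ) as functions on M, where (φ ∗_P ψ)(x) = ∫_P φ(g)·ψ(g⁻¹·x) dμ_P(g) for x ∈ P, and (u ∗_M v)(m) = ∫_M u(m′)·v(m′⁻¹·m) dμ_M(m′) for m ∈ M. (This is the paper's claim that the constant term λ : H^S(P) → H^S(M) is a morphism of algebras.) -/
/-!
Statement 7: the constant-term map is multiplicative for convolution:
`λ(φ ∗_P ψ) = (λφ) ∗_M (λψ)` for compactly supported continuous `φ, ψ : P → ℂ`,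
where `(λφ)(m) = ∫_N φ(σ(m)·n) dμ_N(n)`.
-/

open MeasureTheory

theorem constant_term_convolution
    {P M N : Type*}
    [Group P] [TopologicalSpace P] [IsTopologicalGroup P] [LocallyCompactSpace P]
    [SecondCountableTopology P] [T2Space P] [MeasurableSpace P] [BorelSpace P]
    [Group M] [TopologicalSpace M] [IsTopologicalGroup M] [LocallyCompactSpace M]
    [SecondCountableTopology M] [T2Space M] [MeasurableSpace M] [BorelSpace M]
    [Group N] [TopologicalSpace N] [IsTopologicalGroup N] [LocallyCompactSpace N]
    [SecondCountableTopology N] [T2Space N] [MeasurableSpace N] [BorelSpace N]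
    (μM : Measure M) (μN : Measure N) (μP : Measure P)
    [μM.IsHaarMeasure] [μN.IsHaarMeasure] [SigmaFinite μM] [SigmaFinite μN]
    -- `pr : P → M` is a continuous surjective homomorphism:
    (pr : P →* M) (hprc : Continuous pr) (hprs : Function.Surjective pr)
    -- `N` is identified with the kernel of `pr`, a closed subgroup of `P`:
    (ι : N →* P) (hιc : Continuous ι) (hιinj : Function.Injective ι)
    (hιcl : IsClosed (Set.range ι))
    (hker : ∀ p : P, pr p = 1 ↔ ∃ n : N, ι n = p)
    -- `σ : M → P` is a continuous section of `pr`: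
    (σ : M → P) (hσc : Continuous σ) (hσsec : ∀ m, pr (σ m) = m)
    -- `e(m,n) = σ(m)·n` is a bijection and `μ_P = e_*(μ_M ⊗ μ_N)`:
    (e : M × N → P) (he : ∀ m n, e (m, n) = σ m * ι n)
    (hbij : Function.Bijective e)
    (hμP : μP = Measure.map e (μM.prod μN))
    -- compactly supported continuous functions on `P`:
    (φ ψ : P → ℂ)
    (hφc : Continuous φ) (hφs : HasCompactSupport φ)
    (hψc : Continuous ψ) (hψs : HasCompactSupport ψ) :
    -- `λ(φ ∗_P ψ) = (λφ) ∗_M (λψ)` as functions on `M`: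
    ∀ m : M,
      (∫ n : N, (∫ g : P, φ g * ψ (g⁻¹ * (σ m * ι n)) ∂μP) ∂μN)
        = ∫ m' : M,
            (∫ n : N, φ (σ m' * ι n) ∂μN) * (∫ n : N, ψ (σ (m'⁻¹ * m) * ι n) ∂μN) ∂μM := by
  intro m
  classical
  open scoped Pointwise in
  -- `ι` is a topological (closed) embedding, via the open mapping theorem
  have hιind : Topology.IsInducing ι := by
    let S : Subgroup P := ι.range
    have hScl : IsClosed (S : Set P) := by
      simpa [S, MonoidHom.coe_range] using hιcl
    have : LocallyCompactSpace S := hScl.locallyCompactSpace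
    have hopen : IsOpenMap (ι.rangeRestrict) :=
      (ι.rangeRestrict).isOpenMap_of_sigmaCompact ι.rangeRestrict_surjective
        (continuous_induced_rng.mpr hιc)
    have hinj' : Function.Injective (ι.rangeRestrict) := by
      intro a b hab
      exact hιinj (congrArg Subtype.val hab)
    let h : N ≃ₜ S :=
      Equiv.toHomeomorphOfContinuousOpen
        (Equiv.ofBijective _ ⟨hinj', ι.rangeRestrict_surjective⟩)
        (continuous_induced_rng.mpr hιc) hopen
    have : (ι : N → P) = (Subtype.val : S → P) ∘ h := rfl
    rw [this]
    exact Topology.IsInducing.subtypeVal.comp h.isInducing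
  have hιprop : ∀ {K : Set P}, IsCompact K → IsCompact (ι ⁻¹' K) := fun hK =>
    hιind.isCompact_preimage hιcl hK
  -- basic facts
  have he' : e = fun z : M × N => σ z.1 * ι z.2 := funext fun z => he z.1 z.2
  have hec : Continuous e := by
    rw [he']; exact (hσc.comp continuous_fst).mul (hιc.comp continuous_snd)
  have prι : ∀ n : N, pr (ι n) = 1 := fun n => (hker (ι n)).mpr ⟨n, rfl⟩
  have pre : ∀ z : M × N, pr (e z) = z.1 := by
    intro z; rw [he']; simp [prι z.2, hσsec]
  -- the key integrand on `N × (M × N)`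
  set G : N × (M × N) → ℂ :=
    fun p => φ (e p.2) * ψ ((e p.2)⁻¹ * (σ m * ι p.1)) with hG
  have hGc : Continuous G := by
    have c1 : Continuous fun p : N × (M × N) => e p.2 := hec.comp continuous_snd
    exact (hφc.comp c1).mul
      (hψc.comp ((c1.inv).mul (continuous_const.mul (hιc.comp continuous_fst))))
  -- compact support of `G`
  have hGs : HasCompactSupport G := by
    open scoped Pointwise in
    set Kφ := tsupport φ with hKφ
    set Kψ := tsupport ψ with hKψ
    have hC1 : IsCompact ((σ '' (pr '' Kφ))⁻¹ * Kφ) :=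
      (((hφs.image hprc).image hσc).inv).mul hφs
    have hC2 : IsCompact (({(σ m)⁻¹} * Kφ) * Kψ) :=
      (isCompact_singleton.mul hφs).mul hψs
    apply HasCompactSupport.intro
      ((hιprop hC2).prod (((hφs.image hprc)).prod (hιprop hC1)))
    intro p hp
    by_contra hne
    apply hp
    have h1 : φ (e p.2) ≠ 0 := fun h => hne (by simp [hG, h])
    have h2 : ψ ((e p.2)⁻¹ * (σ m * ι p.1)) ≠ 0 := fun h => hne (by simp [hG, h])
    have he1 : e p.2 ∈ Kφ := subset_tsupport φ h1
    have he2 : (e p.2)⁻¹ * (σ m * ι p.1) ∈ Kψ := subset_tsupport ψ h2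
    have hm' : p.2.1 ∈ pr '' Kφ := ⟨e p.2, he1, pre p.2⟩
    refine ⟨?_, hm', ?_⟩
    · -- ι p.1 ∈ {(σ m)⁻¹} * Kφ * Kψ
      show ι p.1 ∈ ({(σ m)⁻¹} * Kφ) * Kψ
      have : ι p.1 = ((σ m)⁻¹ * e p.2) * ((e p.2)⁻¹ * (σ m * ι p.1)) := by group
      rw [this]
      exact Set.mul_mem_mul (Set.mul_mem_mul rfl he1) he2
    · -- ι p.2.2 ∈ (σ '' (pr '' Kφ))⁻¹ * Kφ
      show ι p.2.2 ∈ (σ '' (pr '' Kφ))⁻¹ * Kφ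
      have heq : ι p.2.2 = (σ p.2.1)⁻¹ * e p.2 := by
        rw [he p.2.1 p.2.2]; group
      rw [heq]
      exact Set.mul_mem_mul (Set.inv_mem_inv.mpr ⟨p.2.1, hm', rfl⟩) he1
  have hGint : Integrable G (μN.prod (μM.prod μN)) :=
    hGc.integrable_of_hasCompactSupport hGs
  -- Step 1: rewrite the inner integral over `P` as an integral over `M × N`
  have step1 : ∀ n : N,
      (∫ g : P, φ g * ψ (g⁻¹ * (σ m * ι n)) ∂μP)
        = ∫ z : M × N, G (n, z) ∂(μM.prod μN) := by
    intro n
    rw [hμP]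
    exact integral_map hec.measurable.aemeasurable
      ((hφc.mul (hψc.comp (continuous_inv.mul continuous_const))).aestronglyMeasurable)
  -- Step 2: swap the order of integration
  have step2 :
      (∫ n : N, ∫ z : M × N, G (n, z) ∂(μM.prod μN) ∂μN)
        = ∫ z : M × N, ∫ n : N, G (n, z) ∂μN ∂(μM.prod μN) :=
    integral_integral_swap (f := fun n z => G (n, z)) hGint
  -- Step 3: compute the inner integral by left invariance of `μN`
  have step3 : ∀ z : M × N,
      (∫ n : N, G (n, z) ∂μN)
        = φ (e z) * ∫ n : N, ψ (σ (z.1⁻¹ * m) * ι n) ∂μN := by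
    intro z
    rw [hG]
    simp only
    rw [MeasureTheory.integral_const_mul]
    congr 1
    set a : P := (e z)⁻¹ * σ m with ha
    have hpra : pr ((σ (z.1⁻¹ * m))⁻¹ * a) = 1 := by
      simp only [ha, hσsec, pre z, map_mul, map_inv]
      group
    obtain ⟨k, hk⟩ := (hker _).mp hpra
    have hak : a = σ (z.1⁻¹ * m) * ι k := by
      rw [hk]; group
    have hptwise : ∀ n : N,
        ψ ((e z)⁻¹ * (σ m * ι n)) = ψ (σ (z.1⁻¹ * m) * ι (k * n)) := by
      intro n
      congr 1
      rw [← mul_assoc, ← ha, hak, map_mul, mul_assoc]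
    simp_rw [hptwise]
    exact integral_mul_left_eq_self (fun n => ψ (σ (z.1⁻¹ * m) * ι n)) k
  -- integrability of the resulting function on `M × N`
  have hInt2 : Integrable
      (fun z : M × N => φ (e z) * ∫ n : N, ψ (σ (z.1⁻¹ * m) * ι n) ∂μN)
      (μM.prod μN) := by
    have h1 : Integrable (fun z : M × N => ∫ n : N, G (n, z) ∂μN) (μM.prod μN) := by
      have := (hGint.swap).integral_prod_left
      simpa using this
    exact h1.congr (Filter.Eventually.of_forall fun z => step3 z)
  -- put everything together
  calc
    (∫ n : N, (∫ g : P, φ g * ψ (g⁻¹ * (σ m * ι n)) ∂μP) ∂μN)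
        = ∫ n : N, ∫ z : M × N, G (n, z) ∂(μM.prod μN) ∂μN := by
          simp_rw [step1]
    _ = ∫ z : M × N, ∫ n : N, G (n, z) ∂μN ∂(μM.prod μN) := step2
    _ = ∫ z : M × N, φ (e z) * ∫ n : N, ψ (σ (z.1⁻¹ * m) * ι n) ∂μN ∂(μM.prod μN) := by
          simp_rw [step3]
    _ = ∫ m' : M, ∫ n' : N,
          φ (e (m', n')) * ∫ n : N, ψ (σ (m'⁻¹ * m) * ι n) ∂μN ∂μN ∂μM :=
        integral_prod _ hInt2
    _ = ∫ m' : M,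
          (∫ n : N, φ (σ m' * ι n) ∂μN) * (∫ n : N, ψ (σ (m'⁻¹ * m) * ι n) ∂μN) ∂μM := by
          refine integral_congr_ae (Filter.Eventually.of_forall fun m' => ?_)
          simp_rw [he m']
          exact integral_mul_const _ _
end

section
/- For all compactly supported continuous K-bi-invariant functions φ, ψ : G → ℂ, the restriction of functions to P is multiplicative for convolution: for every x ∈ P, ∫_G φ(g)·ψ(g⁻¹·x) dμ_G(g) = ∫_P φ(p)·ψ(p⁻¹·x) dμ_P(p); that is, (φ ∗_G ψ)|_P = (φ|_P) ∗_P (ψ|_P). (This is the paper's claim that the restriction map ρ : H^S(G) → H^S(P) is a morphism of algebras, given the Iwasawa decomposition G = P·K.) -/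
/-!
Statement 8: the restriction of functions to `P` is multiplicative for convolution of
compactly supported continuous `K`-bi-invariant functions, given an Iwasawa
decomposition `G = P·K` with compatibly normalized measures:
`(φ ∗_G ψ)|_P = (φ|_P) ∗_P (ψ|_P)`.
-/

open MeasureTheory

theorem restriction_convolution
    {G : Type*} [Group G] [TopologicalSpace G] [IsTopologicalGroup G]
    [LocallyCompactSpace G] [SecondCountableTopology G] [T2Space G]
    [MeasurableSpace G] [BorelSpace G]
    (μG : Measure G) [μG.IsHaarMeasure]
    -- `K` a compact open subgroup with Haar probability measure `μK`:
    (K : Subgroup G) (hKopen : IsOpen (K : Set G)) (hKcpt : IsCompact (K : Set G))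
    (μK : Measure K) [IsProbabilityMeasure μK] [μK.IsHaarMeasure]
    -- `P` a closed subgroup with left Haar measure `μP`:
    (P : Subgroup G) (hPcl : IsClosed (P : Set G))
    (μP : Measure P) [μP.IsHaarMeasure]
    -- the Iwasawa integration formula `∫_G F = ∫_P ∫_K F(p·k)`:
    (hIw : ∀ F : G → ℂ, Continuous F → HasCompactSupport F →
      ∫ g : G, F g ∂μG = ∫ p : P, (∫ k : K, F ((p : G) * (k : G)) ∂μK) ∂μP)
    -- compactly supported continuous `K`-bi-invariant functions:
    (φ ψ : G → ℂ)
    (hφc : Continuous φ) (hφs : HasCompactSupport φ)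
    (hψc : Continuous ψ) (hψs : HasCompactSupport ψ)
    (hφK : ∀ (k k' : K) (g : G), φ ((k : G) * g * (k' : G)) = φ g)
    (hψK : ∀ (k k' : K) (g : G), ψ ((k : G) * g * (k' : G)) = ψ g)
    -- the identity, for every `x ∈ P`:
    (x : P) :
    ∫ g : G, φ g * ψ (g⁻¹ * (x : G)) ∂μG
      = ∫ p : P, φ (p : G) * ψ ((p : G)⁻¹ * (x : G)) ∂μP := by
  have hFc : Continuous (fun g : G => φ g * ψ (g⁻¹ * (x : G))) :=
    hφc.mul (hψc.comp (continuous_inv.mul continuous_const))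
  have hFs : HasCompactSupport (fun g : G => φ g * ψ (g⁻¹ * (x : G))) :=
    hφs.mul_right
  rw [hIw _ hFc hFs]
  refine integral_congr_ae (Filter.Eventually.of_forall fun p => ?_)
  have hkey : ∀ k : K, φ ((p : G) * (k : G)) * ψ (((p : G) * (k : G))⁻¹ * (x : G))
      = φ (p : G) * ψ ((p : G)⁻¹ * (x : G)) := by
    intro k
    have h1 : φ ((p : G) * (k : G)) = φ (p : G) := by
      have := hφK 1 k (p : G); simpa using this
    have h2 : ψ (((p : G) * (k : G))⁻¹ * (x : G)) = ψ ((p : G)⁻¹ * (x : G)) := by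
      have := hψK k⁻¹ 1 ((p : G)⁻¹ * (x : G))
      simpa [mul_inv_rev, mul_assoc] using this
    rw [h1, h2]
  simp only [hkey]
  simp
end
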